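/- Let k be a nonnegative integer, let a ∈ (0,2) be a real number that is not an integer, and let b be any real number. Then the series ∑_{n≥0} Γ(a+n−2−2k) · (1/2 − n)_k · (1−b−n)_k / n! converges absolutely and its sum equals 0. -/

import Mathlib

open Polynomial Filter Asymptotics Topology

noncomputable def poch' (x : ℝ) (n : ℕ) : ℝ := (ascPochhammer ℝ n).eval x


lemma poch'_zero (x : ℝ) : poch' x 0 = 1 := by simp [poch']

lemma poch'_succ (x : ℝ) (n : ℕ) : poch' x (n + 1) = poch' x n * (x + n) :=
  ascPochhammer_succ_eval n x

lemma poch'_ne_zero {c : ℝ} (hcn : ∀ j : ℕ, c + j ≠ 0) (n : ℕ) : poch' c n ≠ 0 := by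
  induction n with
  | zero => simp [poch'_zero]
  | succ n ih => rw [poch'_succ]; exact mul_ne_zero ih (hcn n)

lemma poch'_prod (c : ℝ) (n : ℕ) : poch' c n = ∏ j ∈ Finset.range n, (c + j) := by
  induction n with
  | zero => simp [poch'_zero]
  | succ n ih => rw [poch'_succ, ih, Finset.prod_range_succ]

lemma gamma_poch {c : ℝ} (hcn : ∀ j : ℕ, c + j ≠ 0) (n : ℕ) :
    Real.Gamma (c + n) = Real.Gamma c * poch' c n := by
  induction n with
  | zero => simp [poch'_zero]
  | succ n ih =>
    have h : c + ((n : ℝ) + 1) = (c + n) + 1 := by ring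
    rw [Nat.cast_succ, h, Real.Gamma_add_one (hcn n), ih, poch'_succ]
    ring

lemma gammaSeq_eq (c : ℝ) (n : ℕ) :
    Real.GammaSeq c n = (n : ℝ) ^ c * n.factorial / (poch' c n * (c + n)) := by
  rw [Real.GammaSeq, poch'_prod, ← Finset.prod_range_succ]

lemma master {c : ℝ} (hcn : ∀ j : ℕ, c + j ≠ 0) (W : ℝ[X]) (d : ℕ) (hW : W.natDegree ≤ d) :
    (fun n : ℕ => poch' c n * W.eval (n : ℝ) / n.factorial)
      =O[atTop] fun n : ℕ => (n : ℝ) ^ (c + d - 1) := by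
  have hG0 : Real.Gamma c ≠ 0 := by
    refine Real.Gamma_ne_zero fun m hm => hcn m ?_
    rw [hm]; ring
  have hGSne : ∀ n : ℕ, 1 ≤ n → Real.GammaSeq c n ≠ 0 := by
    intro n hn
    rw [gammaSeq_eq]
    have h1 : (0:ℝ) < (n:ℝ) ^ c := Real.rpow_pos_of_pos (by exact_mod_cast hn) c
    have h2 : (0:ℝ) < n.factorial := by exact_mod_cast n.factorial_pos
    exact div_ne_zero (by positivity) (mul_ne_zero (poch'_ne_zero hcn n) (hcn n))
  have heq : (fun n : ℕ => poch' c n * W.eval (n : ℝ) / n.factorial)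
      =ᶠ[atTop] fun n : ℕ =>
        (n:ℝ) ^ c * W.eval (n:ℝ) * (Real.GammaSeq c n)⁻¹ * (c + n)⁻¹ := by
    filter_upwards [eventually_ge_atTop 1] with n hn
    have h := gammaSeq_eq c n
    have hp := poch'_ne_zero hcn n
    have hc' := hcn n
    have hnc : (n:ℝ) ^ c ≠ 0 := (Real.rpow_pos_of_pos (by exact_mod_cast hn) c).ne'
    have hf : (n.factorial : ℝ) ≠ 0 := by exact_mod_cast n.factorial_pos.ne'
    rw [h, inv_div]
    field_simp
  have hWO : (fun n : ℕ => W.eval (n:ℝ)) =O[atTop] fun n : ℕ => (n:ℝ) ^ (d:ℕ) := by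
    have h : (fun x : ℝ => W.eval x) =O[atTop] fun x : ℝ => eval x ((X:ℝ[X]) ^ d) := by
      refine Polynomial.isBigO_of_degree_le _ _ ?_
      refine le_trans degree_le_natDegree ?_
      rw [degree_X_pow]
      exact_mod_cast hW
    simp only [eval_pow, eval_X] at h
    exact h.comp_tendsto tendsto_natCast_atTop_atTop
  have hGSO : (fun n : ℕ => (Real.GammaSeq c n)⁻¹) =O[atTop] fun _ : ℕ => (1:ℝ) :=
    (((Real.GammaSeq_tendsto_Gamma c).inv₀ hG0)).isBigO_one ℝ
  have hcnO : (fun n : ℕ => (c + n)⁻¹) =O[atTop] fun n : ℕ => ((n:ℝ))⁻¹ := by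
    rw [isBigO_iff]
    refine ⟨2, ?_⟩
    filter_upwards [eventually_ge_atTop (max 1 ⌈2 * |c|⌉₊)] with n hn
    have hn1 : (1:ℝ) ≤ n := by exact_mod_cast le_trans (le_max_left _ _) hn
    have hc2 : 2 * |c| ≤ (n:ℝ) := by
      refine le_trans (Nat.le_ceil _) ?_
      exact_mod_cast le_trans (le_max_right _ _) hn
    have hneg : -|c| ≤ c := neg_abs_le c
    have hpos : (n:ℝ)/2 ≤ c + n := by linarith
    have h0 : (0:ℝ) < c + n := by linarith
    rw [Real.norm_eq_abs, Real.norm_eq_abs, abs_inv, abs_inv, abs_of_pos h0,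
      abs_of_pos (by linarith : (0:ℝ) < (n:ℝ))]
    calc (c + (n:ℝ))⁻¹ ≤ ((n:ℝ)/2)⁻¹ := by
          apply inv_anti₀ (by linarith) hpos
      _ = 2 * (n:ℝ)⁻¹ := by rw [inv_div]; ring
  have combine := ((isBigO_refl (fun n : ℕ => (n:ℝ) ^ c) atTop).mul hWO).mul hGSO |>.mul hcnO
  have hRHS : (fun n : ℕ => (n:ℝ) ^ c * (n:ℝ) ^ (d:ℕ) * 1 * (n:ℝ)⁻¹)
      =ᶠ[atTop] fun n : ℕ => (n:ℝ) ^ (c + d - 1) := by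
    filter_upwards [eventually_ge_atTop 1] with n hn
    have hpos : (0:ℝ) < n := by exact_mod_cast hn
    rw [mul_one, ← Real.rpow_natCast (n:ℝ) d, ← Real.rpow_add hpos, ← Real.rpow_neg_one,
      ← Real.rpow_add hpos]
    norm_num [sub_eq_add_neg]
  exact (combine.congr' heq.symm hRHS)


lemma exists_Q (c : ℝ) (hc1 : c - 1 ≠ 0) (hcn : ∀ n : ℕ, c + n ≠ 0) :
    ∀ (n : ℕ) (F : ℝ[X]), F.natDegree ≤ n →
      ∃ Q : ℝ[X], Q.natDegree ≤ n ∧ (X + C c) * (Q.comp (X + 1)) - (X + 1) * Q = F := by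
  intro n
  induction n with
  | zero =>
    intro F hF
    refine ⟨C (F.coeff 0 / (c - 1)), by simp, ?_⟩
    have hFC : F = C (F.coeff 0) := Polynomial.eq_C_of_natDegree_le_zero hF
    rw [Polynomial.C_comp]
    have h2 : (X + C c) * C (F.coeff 0 / (c - 1)) - (X + 1) * C (F.coeff 0 / (c - 1))
        = C (c - 1) * C (F.coeff 0 / (c - 1)) := by
      rw [Polynomial.C_sub, Polynomial.C_1]; ring
    rw [h2, ← Polynomial.C_mul, mul_div_cancel₀ _ hc1, ← hFC]
  | succ n ih =>
    intro F hF
    set q : ℝ := F.coeff (n + 1) / (c + n) with hq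
    set Q₁ : ℝ[X] := C q * X ^ (n + 1) with hQ₁
    set B : ℝ[X] := (X + 1) ^ (n + 1) with hB
    set A : ℝ[X] := X * B + C c * B - X ^ (n + 2) - X ^ (n + 1) with hA
    have hcomp : Q₁.comp (X + 1) = C q * B := by
      simp [hQ₁, hB, Polynomial.mul_comp, Polynomial.C_comp, Polynomial.pow_comp,
        Polynomial.X_comp]
    have hT₁eq : (X + C c) * (Q₁.comp (X + 1)) - (X + 1) * Q₁ = C q * A := by
      rw [hcomp, hQ₁, hA, hB]; ring
    have hBc : ∀ m : ℕ, B.coeff m = ((n + 1).choose m : ℝ) := by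
      intro m; rw [hB, Polynomial.coeff_X_add_one_pow]
    have hX1 : (X + (1 : ℝ[X])).natDegree = 1 := by
      rw [← Polynomial.C_1]; exact Polynomial.natDegree_X_add_C 1
    have hBdeg : B.natDegree ≤ n + 1 := by
      rw [hB]
      refine Polynomial.natDegree_pow_le.trans ?_
      rw [hX1, mul_one]
    have hAdeg : A.natDegree ≤ n + 2 := by
      refine (Polynomial.natDegree_sub_le _ _).trans (max_le ?_
        ((Polynomial.natDegree_X_pow_le (R := ℝ) (n + 1)).trans (by omega)))
      refine (Polynomial.natDegree_sub_le _ _).trans (max_le ?_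
        (Polynomial.natDegree_X_pow_le (R := ℝ) (n + 2)))
      refine (Polynomial.natDegree_add_le _ _).trans (max_le ?_ ?_)
      · refine Polynomial.natDegree_mul_le.trans ?_
        have := Polynomial.natDegree_X_le (R := ℝ)
        omega
      · exact (Polynomial.natDegree_C_mul_le _ _).trans (by omega)
    have hA1 : A.coeff (n + 1) = c + n := by
      rw [hA]
      simp only [Polynomial.coeff_sub, Polynomial.coeff_add, Polynomial.coeff_C_mul,
        Polynomial.coeff_X_pow, Polynomial.coeff_X_mul, hBc]
      simp [Nat.choose_succ_self_right]
      ring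
    have hA2 : A.coeff (n + 2) = 0 := by
      rw [hA]
      have : (X * B).coeff (n + 2) = B.coeff (n + 1) := Polynomial.coeff_X_mul B (n + 1)
      simp only [Polynomial.coeff_sub, Polynomial.coeff_add, Polynomial.coeff_C_mul,
        Polynomial.coeff_X_pow, this, hBc]
      simp
    have hAhigh : ∀ m : ℕ, n + 2 < m → A.coeff m = 0 := fun m hm =>
      Polynomial.coeff_eq_zero_of_natDegree_lt (lt_of_le_of_lt hAdeg hm)
    set F' : ℝ[X] := F - C q * A with hF'
    have hF'deg : F'.natDegree ≤ n := by
      rw [Polynomial.natDegree_le_iff_coeff_eq_zero]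
      intro N hN
      rw [hF', Polynomial.coeff_sub, Polynomial.coeff_C_mul]
      rcases (by omega : N = n + 1 ∨ N = n + 2 ∨ n + 2 < N) with rfl | rfl | h2
      · rw [hA1, hq, div_mul_cancel₀ _ (hcn n), sub_self]
      · rw [hA2, Polynomial.coeff_eq_zero_of_natDegree_lt (by omega : F.natDegree < n + 2),
          mul_zero, sub_self]
      · rw [hAhigh N h2,
          Polynomial.coeff_eq_zero_of_natDegree_lt (by omega : F.natDegree < N),
          mul_zero, sub_self]
    obtain ⟨Q₂, hQ₂deg, hQ₂⟩ := ih F' hF'deg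
    refine ⟨Q₁ + Q₂, ?_, ?_⟩
    · refine (Polynomial.natDegree_add_le _ _).trans (max_le ?_ (hQ₂deg.trans (Nat.le_succ n)))
      exact Polynomial.natDegree_C_mul_le _ _ |>.trans (by simp [Polynomial.natDegree_X_pow_le])
    · rw [Polynomial.add_comp]
      have : (X + C c) * (Q₁.comp (X + 1) + Q₂.comp (X + 1)) - (X + 1) * (Q₁ + Q₂)
          = ((X + C c) * (Q₁.comp (X + 1)) - (X + 1) * Q₁)
            + ((X + C c) * (Q₂.comp (X + 1)) - (X + 1) * Q₂) := by ring
      rw [this, hT₁eq, hQ₂, hF']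
      ring


/-- Pochhammer symbol (rising factorial) for a real argument. -/
noncomputable def poch (x : ℝ) (n : ℕ) : ℝ := (ascPochhammer ℝ n).eval x

lemma poch_eq : poch = poch' := rfl


theorem stmt_8 (k : ℕ) (a : ℝ) (ha0 : 0 < a) (ha2 : a < 2)
    (haInt : ∀ z : ℤ, a ≠ (z : ℝ)) (b : ℝ) :
    Summable (fun n : ℕ =>
        |Real.Gamma (a + n - 2 - 2 * k) * poch (1 / 2 - n) k * poch (1 - b - n) k /
          (Nat.factorial n : ℝ)|) ∧
    (∑' n : ℕ,
        Real.Gamma (a + n - 2 - 2 * k) * poch (1 / 2 - n) k * poch (1 - b - n) k /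
          (Nat.factorial n : ℝ)) = 0 := by
  set c : ℝ := a - 2 - 2 * k with hc
  have hcz : ∀ j : ℕ, c + j ≠ 0 := by
    intro j h
    refine haInt (2 + 2 * k - j) ?_
    push_cast
    rw [hc] at h
    linarith
  have hc1 : c - 1 ≠ 0 := by
    intro h
    refine haInt (3 + 2 * k) ?_
    push_cast
    rw [hc] at h
    linarith
  clear_value c
  set f : ℕ → ℝ := fun n =>
    Real.Gamma (a + n - 2 - 2 * k) * poch (1 / 2 - n) k * poch (1 - b - n) k /
      (Nat.factorial n : ℝ) with hf
  set P : ℝ[X] := (ascPochhammer ℝ k).comp (C (1/2 : ℝ) - X) *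
      (ascPochhammer ℝ k).comp (C (1 - b) - X) with hP
  have hPeval : ∀ x : ℝ, P.eval x = poch (1/2 - x) k * poch (1 - b - x) k := by
    intro x
    simp [hP, poch, Polynomial.eval_comp]
  have hdeg1 : ∀ u : ℝ, (C u - X : ℝ[X]).natDegree ≤ 1 := by
    intro u
    refine (Polynomial.natDegree_sub_le _ _).trans ?_
    simp [Polynomial.natDegree_C]
  have hPdeg : P.natDegree ≤ 2 * k := by
    rw [hP]
    refine Polynomial.natDegree_mul_le.trans ?_
    have h1 : ((ascPochhammer ℝ k).comp (C (1/2:ℝ) - X)).natDegree ≤ k := by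
      refine Polynomial.natDegree_comp_le.trans ?_
      rw [ascPochhammer_natDegree]
      calc k * (C (1/2:ℝ) - X).natDegree ≤ k * 1 := Nat.mul_le_mul_left k (hdeg1 _)
        _ = k := mul_one k
    have h2 : ((ascPochhammer ℝ k).comp (C (1 - b) - X)).natDegree ≤ k := by
      refine Polynomial.natDegree_comp_le.trans ?_
      rw [ascPochhammer_natDegree]
      calc k * (C (1 - b) - X).natDegree ≤ k * 1 := Nat.mul_le_mul_left k (hdeg1 _)
        _ = k := mul_one k
    omega
  set F : ℝ[X] := (X + 1) * P with hF
  have hFdeg : F.natDegree ≤ 2 * k + 1 := by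
    rw [hF]
    refine Polynomial.natDegree_mul_le.trans ?_
    have : (X + 1 : ℝ[X]).natDegree ≤ 1 := by
      refine (Polynomial.natDegree_add_le _ _).trans ?_
      simp
    omega
  obtain ⟨Q, hQdeg, hQid⟩ := exists_Q c hc1 hcz (2 * k + 1) F hFdeg
  have hQeval : ∀ x : ℝ, (x + c) * Q.eval (x + 1) - (x + 1) * Q.eval x
      = (x + 1) * P.eval x := by
    intro x
    have h := congrArg (Polynomial.eval x) hQid
    simpa [Polynomial.eval_comp, hF] using h
  have hQ0 : Q.eval 0 = 0 := by
    have h := hQeval (-1)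
    norm_num at h
    rcases h with h | h
    · exact absurd (by linarith : c = 1) (by intro hh; exact hc1 (by rw [hh]; ring))
    · exact h
  have hfn : ∀ n : ℕ, f n = Real.Gamma c * (poch' c n * P.eval (n:ℝ) / n.factorial) := by
    intro n
    have harg : a + n - 2 - 2 * k = c + n := by rw [hc]; ring
    rw [hf]
    simp only
    rw [harg, gamma_poch hcz n, hPeval, ← poch_eq]
    push_cast
    ring
  set G : ℕ → ℝ := fun n => Real.Gamma c * (poch' c n * Q.eval (n:ℝ) / n.factorial) with hG
  have htele : ∀ n : ℕ, f n = G (n + 1) - G n := by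
    intro n
    rw [hfn n, hG]
    simp only
    rw [poch'_succ, Nat.factorial_succ]
    have hkey := hQeval n
    have hfac : (n.factorial : ℝ) ≠ 0 := by exact_mod_cast n.factorial_pos.ne'
    have hn1 : ((n : ℝ) + 1) ≠ 0 := by positivity
    push_cast
    field_simp
    linear_combination (-(Real.Gamma c * poch' c n)) * hkey
  have hO : f =O[atTop] fun n : ℕ => (n:ℝ) ^ (a - 3) := by
    have h := (master hcz P (2*k) hPdeg).const_mul_left (Real.Gamma c)
    have hexp : c + ((2*k : ℕ):ℝ) - 1 = a - 3 := by rw [hc]; push_cast; ring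
    rw [hexp] at h
    have hfe : f = fun n : ℕ => Real.Gamma c * (poch' c n * P.eval (n:ℝ) / n.factorial) :=
      funext hfn
    rw [hfe]
    exact h
  have hsumg : Summable (fun n : ℕ => (n:ℝ) ^ (a - 3)) :=
    Real.summable_nat_rpow.mpr (by linarith)
  have hsf : Summable f := summable_of_isBigO_nat hsumg hO
  have habs : Summable (fun n => |f n|) := by
    have := summable_of_isBigO_nat hsumg hO.norm_left
    simpa [Real.norm_eq_abs] using this
  have hGtend : Tendsto G atTop (𝓝 0) := by
    have h := (master hcz Q (2*k+1) hQdeg).const_mul_left (Real.Gamma c)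
    have hexp : c + ((2*k+1 : ℕ):ℝ) - 1 = a - 2 := by rw [hc]; push_cast; ring
    rw [hexp] at h
    have h0 : Tendsto (fun n : ℕ => (n:ℝ) ^ (a - 2)) atTop (𝓝 0) := by
      have h1 := tendsto_rpow_neg_atTop (y := 2 - a) (by linarith)
      simp only [neg_sub] at h1
      exact h1.comp tendsto_natCast_atTop_atTop
    exact h.trans_tendsto h0
  have hG0 : G 0 = 0 := by
    rw [hG]
    simp only [Nat.cast_zero, hQ0]
    ring
  have hpart : ∀ N : ℕ, ∑ i ∈ Finset.range N, f i = G N := by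
    intro N
    calc ∑ i ∈ Finset.range N, f i = ∑ i ∈ Finset.range N, (G (i+1) - G i) :=
          Finset.sum_congr rfl (fun i _ => htele i)
      _ = G N - G 0 := Finset.sum_range_sub G N
      _ = G N := by rw [hG0, sub_zero]
  have hts : Tendsto (fun N => ∑ i ∈ Finset.range N, f i) atTop (𝓝 (∑' n, f n)) :=
    hsf.hasSum.tendsto_sum_nat
  rw [show (fun N => ∑ i ∈ Finset.range N, f i) = G from funext hpart] at hts
  exact ⟨habs, tendsto_nhds_unique hts hGtend⟩
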